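/- Let G = K_{n1,...,nk} be a complete k-partite graph with k ≥ 3 and n1 ≤ ... ≤ nk, and set s = n1 + ... + n_{k-1}, t = nk. If s ≤ t, then rc(G) = min{⌈t^{1/s}⌉, 3}. -/

import Mathlib

open SimpleGraph

/-- A graph `G` is rainbow connected under edge-coloring `c` if any two vertices are
joined by a path whose edges receive pairwise distinct colors. -/
def RainbowConnected {V : Type*} (G : SimpleGraph V) (c : Sym2 V → ℕ) : Prop :=
  ∀ u v : V, ∃ p : G.Walk u v, p.IsPath ∧ (p.edges.map c).Nodup

/-- The rainbow connection number: the least number of colors in an edge-coloring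
making `G` rainbow connected. -/
noncomputable def rc {V : Type*} [Fintype V] (G : SimpleGraph V) : ℕ :=
  sInf {n | ∃ c : Sym2 V → ℕ, (∀ e ∈ G.edgeSet, c e < n) ∧ RainbowConnected G c}

/-- Least `n` with `n ^ s ≥ t`, i.e. `⌈t^(1/s)⌉`. -/
noncomputable def ceilRoot (s t : ℕ) : ℕ := sInf {n | t ≤ n ^ s}

section helpers
variable {V : Type*} {G : SimpleGraph V}

lemma rainbow1 {a b : V} (h : G.Adj a b) (c : Sym2 V → ℕ) :
    ∃ p : G.Walk a b, p.IsPath ∧ (p.edges.map c).Nodup := by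
  refine ⟨Walk.cons h Walk.nil, ?_, by simp⟩
  simp [Walk.isPath_def, h.ne]

lemma rainbow2 {a b d : V} (h1 : G.Adj a b) (h2 : G.Adj b d) (had : a ≠ d)
    (c : Sym2 V → ℕ) (hc : c s(a, b) ≠ c s(b, d)) :
    ∃ p : G.Walk a d, p.IsPath ∧ (p.edges.map c).Nodup := by
  refine ⟨Walk.cons h1 (Walk.cons h2 Walk.nil), ?_, by simp [hc]⟩
  simp [Walk.isPath_def, h1.ne, h2.ne, had]

lemma rainbow3 {a b d e : V} (h1 : G.Adj a b) (h2 : G.Adj b d) (h3 : G.Adj d e)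
    (had : a ≠ d) (hae : a ≠ e) (hbe : b ≠ e)
    (c : Sym2 V → ℕ) (hc1 : c s(a, b) ≠ c s(b, d)) (hc2 : c s(a,b) ≠ c s(d,e))
    (hc3 : c s(b,d) ≠ c s(d,e)) :
    ∃ p : G.Walk a e, p.IsPath ∧ (p.edges.map c).Nodup := by
  refine ⟨Walk.cons h1 (Walk.cons h2 (Walk.cons h3 Walk.nil)), ?_, by simp [hc1, hc2, hc3]⟩
  simp [Walk.isPath_def, h1.ne, h2.ne, h3.ne, had, hae, hbe]
end helpers

abbrev Vt {k : ℕ} (n : Fin k → ℕ) : Type := Σ i, Fin (n i)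


lemma ne_of_fst_ne {k : ℕ} {n : Fin k → ℕ} {x y : Vt n} (h : x.1 ≠ y.1) : x ≠ y :=
  fun hxy => h (congrArg Sigma.fst hxy)

lemma upper3 {k : ℕ} (n : Fin k → ℕ) (hpos : ∀ i, 1 ≤ n i) (L i0 i1 : Fin k)
    (h01 : i0 ≠ i1) (h0L : i0 ≠ L) (h1L : i1 ≠ L) :
    ∃ c : Sym2 (Vt n) → ℕ,
      (∀ e ∈ (completeMultipartiteGraph (fun i => Fin (n i))).edgeSet, c e < 3) ∧
      RainbowConnected (completeMultipartiteGraph (fun i => Fin (n i))) c := by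
  set G := completeMultipartiteGraph (fun i => Fin (n i)) with hG
  have adj_iff : ∀ x y : Vt n, G.Adj x y ↔ x.1 ≠ y.1 := fun _ _ => by simp [hG]
  set h : Vt n → ℕ := fun z => if z.1 = i0 then 0 else 1 with hh
  have hval0 : ∀ z : Vt n, z.1 = i0 → h z = 0 := fun z hz => by simp [hh, hz]
  have hval1 : ∀ z : Vt n, z.1 ≠ i0 → h z = 1 := fun z hz => by simp [hh, hz]
  have hle : ∀ z : Vt n, h z ≤ 1 := fun z => by rw [hh]; dsimp only; split <;> omega
  set g : Vt n → Vt n → ℕ := fun x y =>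
    if x.1 = L ∧ y.1 = L then 0 else if x.1 = L then h y else if y.1 = L then h x else 2
    with hgdef
  have gLS : ∀ x y : Vt n, x.1 = L → y.1 ≠ L → g x y = h y := by
    intro x y hx hy; simp [hgdef, hx, hy]
  have gSL : ∀ x y : Vt n, x.1 ≠ L → y.1 = L → g x y = h x := by
    intro x y hx hy; simp [hgdef, hx, hy]
  have gSS : ∀ x y : Vt n, x.1 ≠ L → y.1 ≠ L → g x y = 2 := by
    intro x y hx hy; simp [hgdef, hx, hy]
  have hsymm : ∀ x y : Vt n, g x y = g y x := by
    intro x y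
    by_cases hx : x.1 = L <;> by_cases hy : y.1 = L <;> simp [hgdef, hx, hy]
  refine ⟨Sym2.lift ⟨g, hsymm⟩, ?_, ?_⟩
  · intro e _
    induction e using Sym2.ind with
    | _ x y =>
      simp only [Sym2.lift_mk]
      by_cases hx : x.1 = L <;> by_cases hy : y.1 = L
      · simp [hgdef, hx, hy]
      · rw [gLS x y hx hy]; have := hle y; omega
      · rw [gSL x y hx hy]; have := hle x; omega
      · rw [gSS x y hx hy]; omega
  · intro u v
    set c : Sym2 (Vt n) → ℕ := Sym2.lift ⟨g, hsymm⟩ with hc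
    have hcval : ∀ x y : Vt n, c s(x,y) = g x y := fun x y => by simp [hc]
    rcases eq_or_ne u v with rfl | huv
    · exact ⟨Walk.nil, by simp, by simp⟩
    rcases ne_or_eq u.1 v.1 with hne | heq
    · exact rainbow1 ((adj_iff u v).2 hne) c
    set w0 : Vt n := ⟨i0, ⟨0, hpos i0⟩⟩ with hw0
    set w1 : Vt n := ⟨i1, ⟨0, hpos i1⟩⟩ with hw1
    set tv0 : Vt n := ⟨L, ⟨0, hpos L⟩⟩ with htv0
    have w0fst : w0.1 = i0 := rfl
    have w1fst : w1.1 = i1 := rfl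
    have tvfst : tv0.1 = L := rfl
    rcases eq_or_ne u.1 L with hL | hL
    · -- u,v in part L : path u - w0 - w1 - v
      have a1 : u.1 ≠ w0.1 := by rw [hL, w0fst]; exact Ne.symm h0L
      have a2 : w0.1 ≠ w1.1 := by rw [w0fst, w1fst]; exact h01
      have a3 : w1.1 ≠ v.1 := by rw [w1fst, ← heq, hL]; exact h1L
      have a4 : u.1 ≠ w1.1 := by rw [hL, w1fst]; exact Ne.symm h1L
      have a5 : w0.1 ≠ v.1 := by rw [w0fst, ← heq, hL]; exact h0L
      refine rainbow3 ((adj_iff _ _).2 a1) ((adj_iff _ _).2 a2) ((adj_iff _ _).2 a3)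
        (ne_of_fst_ne a4) huv (ne_of_fst_ne a5) c ?_ ?_ ?_
      · rw [hcval, hcval, gLS u w0 hL (w0fst ▸ h0L), gSS w0 w1 (w0fst ▸ h0L) (w1fst ▸ h1L),
          hval0 w0 w0fst]; omega
      · rw [hcval, hcval, gLS u w0 hL (w0fst ▸ h0L), gSL w1 v (w1fst ▸ h1L) (heq ▸ hL),
          hval0 w0 w0fst, hval1 w1 (w1fst ▸ Ne.symm h01)]
        omega
      · rw [hcval, hcval, gSS w0 w1 (w0fst ▸ h0L) (w1fst ▸ h1L),
          gSL w1 v (w1fst ▸ h1L) (heq ▸ hL), hval1 w1 (w1fst ▸ Ne.symm h01)]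
        omega
    · -- u,v in part ≠ L : path u - tv0 - x - v
      have hvL : v.1 ≠ L := heq ▸ hL
      set x : Vt n := if u.1 = i0 then w1 else w0 with hx
      have hxfst : x.1 ≠ u.1 := by
        rw [hx]; split
        · rename_i hui0; rw [w1fst, hui0]; exact Ne.symm h01
        · rename_i hui0; rw [w0fst]; exact fun hcon => hui0 hcon.symm
      have hxL : x.1 ≠ L := by rw [hx]; split; exacts [h1L, h0L]
      have hhx : h x ≠ h u := by
        rw [hx]; split
        · rename_i hui0
          rw [hval1 w1 (w1fst ▸ Ne.symm h01), hval0 u hui0]; omega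
        · rename_i hui0
          rw [hval0 w0 w0fst, hval1 u hui0]; omega
      have a1 : u.1 ≠ tv0.1 := by rw [tvfst]; exact hL
      have a2 : tv0.1 ≠ x.1 := by rw [tvfst]; exact Ne.symm hxL
      have a3 : x.1 ≠ v.1 := by rw [← heq]; exact hxfst
      have a5 : tv0.1 ≠ v.1 := by rw [tvfst]; exact Ne.symm hvL
      refine rainbow3 ((adj_iff _ _).2 a1) ((adj_iff _ _).2 a2) ((adj_iff _ _).2 a3)
        (ne_of_fst_ne (Ne.symm hxfst)) huv (ne_of_fst_ne a5) c ?_ ?_ ?_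
      · rw [hcval, hcval, gSL u tv0 hL tvfst, gLS tv0 x tvfst hxL]; exact Ne.symm hhx
      · rw [hcval, hcval, gSL u tv0 hL tvfst, gSS x v hxL hvL]; have := hle u; omega
      · rw [hcval, hcval, gLS tv0 x tvfst hxL, gSS x v hxL hvL]; have := hle x; omega

lemma cardT {k : ℕ} (n : Fin k → ℕ) (L : Fin k) :
    Fintype.card {x : Vt n // x.1 = L} = n L := by
  have e : {x : Vt n // x.1 = L} ≃ Fin (n L) :=
    { toFun := fun x => Fin.cast (congrArg n x.2) x.1.2
      invFun := fun j => ⟨⟨L, j⟩, rfl⟩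
      left_inv := by rintro ⟨⟨i, j⟩, h⟩; dsimp only at h; subst h; rfl
      right_inv := fun j => rfl }
  rw [Fintype.card_congr e, Fintype.card_fin]

lemma cardS {k : ℕ} (n : Fin k → ℕ) (L : Fin k) :
    Fintype.card {x : Vt n // x.1 ≠ L} = ∑ i ∈ Finset.univ.erase L, n i := by
  have h1 : Fintype.card (Vt n) = ∑ i, n i := by simp
  have h2 : Fintype.card {x : Vt n // x.1 ≠ L}
      = Fintype.card (Vt n) - Fintype.card {x : Vt n // x.1 = L} :=
    Fintype.card_subtype_compl _
  have h3 := Finset.sum_erase_add Finset.univ n (Finset.mem_univ L)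
  have h4 := cardT n L
  omega

set_option maxHeartbeats 1000000 in
lemma upper2 {k : ℕ} (n : Fin k → ℕ) (L : Fin k)
    (hst : Fintype.card {x : Vt n // x.1 ≠ L} ≤ n L)
    (h2s : n L ≤ 2 ^ Fintype.card {x : Vt n // x.1 ≠ L}) :
    ∃ c : Sym2 (Vt n) → ℕ,
      (∀ e ∈ (completeMultipartiteGraph (fun i => Fin (n i))).edgeSet, c e < 2) ∧
      RainbowConnected (completeMultipartiteGraph (fun i => Fin (n i))) c := by
  classical
  set G := completeMultipartiteGraph (fun i => Fin (n i)) with hG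
  have adj_iff : ∀ x y : Vt n, G.Adj x y ↔ x.1 ≠ y.1 := fun _ _ => by simp [hG]
  set S := {x : Vt n // x.1 ≠ L} with hS
  set T := {x : Vt n // x.1 = L} with hT
  set basis : S → (S → Bool) := fun w x => decide (x = w) with hbasis
  have basis_inj : Function.Injective basis := by
    intro w w' hww
    have := congrFun hww w
    simp [hbasis] at this
    exact this
  have hcardA : (Finset.image basis Finset.univ).card = Fintype.card S := by
    rw [Finset.card_image_of_injective _ basis_inj, Finset.card_univ]
  have hcardF : Fintype.card (S → Bool) = 2 ^ Fintype.card S := by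
    simp [Fintype.card_fun]
  obtain ⟨B, hAB, hBcard⟩ := Finset.exists_superset_card_eq
    (n := n L) (hcardA ▸ hst) (by rw [← hcardF] at h2s; simpa using h2s)
  have e : T ≃ B := Fintype.equivOfCardEq (by rw [Fintype.card_coe, hBcard, cardT])
  set f : T → S → Bool := fun j => (e j : S → Bool) with hf
  have finj : Function.Injective f := fun a b hab => e.injective (Subtype.ext hab)
  have fbasis : ∀ w : S, ∃ j : T, f j = basis w := by
    intro w
    refine ⟨e.symm ⟨basis w, hAB (Finset.mem_image_of_mem _ (Finset.mem_univ w))⟩, ?_⟩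
    simp [hf]
  set b01 : Bool → ℕ := fun b => if b then 1 else 0 with hb01
  set g : Vt n → Vt n → ℕ := fun x y =>
    if hx : x.1 = L then (if hy : y.1 = L then 0 else b01 (f ⟨x, hx⟩ ⟨y, hy⟩))
    else if hy : y.1 = L then b01 (f ⟨y, hy⟩ ⟨x, hx⟩) else 0 with hgdef
  have gTS : ∀ (x y : Vt n) (hx : x.1 = L) (hy : y.1 ≠ L),
      g x y = b01 (f ⟨x, hx⟩ ⟨y, hy⟩) := by
    intro x y hx hy; simp [hgdef, hx, hy]
  have gST : ∀ (x y : Vt n) (hx : x.1 ≠ L) (hy : y.1 = L),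
      g x y = b01 (f ⟨y, hy⟩ ⟨x, hx⟩) := by
    intro x y hx hy; simp [hgdef, hx, hy]
  have hsymm : ∀ x y : Vt n, g x y = g y x := by
    intro x y
    by_cases hx : x.1 = L <;> by_cases hy : y.1 = L <;> simp [hgdef, hx, hy]
  refine ⟨Sym2.lift ⟨g, hsymm⟩, ?_, ?_⟩
  · intro e' _
    induction e' using Sym2.ind with
    | _ x y =>
      simp only [Sym2.lift_mk]
      have hb : ∀ b, b01 b < 2 := by intro b; rw [hb01]; dsimp only; split <;> omega
      by_cases hx : x.1 = L <;> by_cases hy : y.1 = L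
      · simp [hgdef, hx, hy]
      · rw [gTS x y hx hy]; exact hb _
      · rw [gST x y hx hy]; exact hb _
      · simp [hgdef, hx, hy]
  · intro u v
    set c : Sym2 (Vt n) → ℕ := Sym2.lift ⟨g, hsymm⟩ with hc
    have hcval : ∀ x y : Vt n, c s(x,y) = g x y := fun x y => by simp [hc]
    rcases eq_or_ne u v with rfl | huv
    · exact ⟨Walk.nil, by simp, by simp⟩
    rcases ne_or_eq u.1 v.1 with hne | heq
    · exact rainbow1 ((adj_iff u v).2 hne) c
    rcases eq_or_ne u.1 L with hL | hL
    · -- both in part L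
      have hvL : v.1 = L := heq ▸ hL
      have hsub : (⟨u, hL⟩ : T) ≠ ⟨v, hvL⟩ := fun hcon => huv (congrArg Subtype.val hcon)
      have hfne : f ⟨u, hL⟩ ≠ f ⟨v, hvL⟩ := fun hcon => hsub (finj hcon)
      obtain ⟨w, hw⟩ : ∃ w : S, f ⟨u, hL⟩ w ≠ f ⟨v, hvL⟩ w := by
        by_contra hcon
        push_neg at hcon
        exact hfne (funext hcon)
      have a1 : u.1 ≠ w.1.1 := by rw [hL]; exact Ne.symm w.2
      have a2 : w.1.1 ≠ v.1 := by rw [hvL]; exact w.2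
      refine rainbow2 ((adj_iff _ _).2 a1) ((adj_iff _ _).2 a2) huv c ?_
      rw [hcval, hcval, gTS u w.1 hL w.2, gST w.1 v w.2 hvL]
      intro hcon
      apply hw
      have : ∀ b b' : Bool, b01 b = b01 b' → b = b' := by
        intro b b'; rw [hb01]; cases b <;> cases b' <;> simp
      exact this _ _ hcon
    · -- both in part p ≠ L
      have hvL : v.1 ≠ L := heq ▸ hL
      set wu : S := ⟨u, hL⟩ with hwu
      set wv : S := ⟨v, hvL⟩ with hwv
      have hwune : wv ≠ wu := fun hcon => huv (congrArg Subtype.val hcon).symm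
      obtain ⟨j, hj⟩ := fbasis wu
      have a1 : u.1 ≠ j.1.1 := by rw [j.2]; exact hL
      have a2 : j.1.1 ≠ v.1 := by rw [j.2]; exact Ne.symm hvL
      refine rainbow2 ((adj_iff _ _).2 a1) ((adj_iff _ _).2 a2) huv c ?_
      rw [hcval, hcval, gST u j.1 hL j.2, gTS j.1 v j.2 hvL]
      have e1 : (⟨j.1, j.2⟩ : T) = j := rfl
      rw [e1, hj, hbasis]
      simp only [decide_eq_true_eq]
      simp [hwune, hb01]
      have hu' : (⟨u, hL⟩ : S) = wu := rfl
      have hv' : ¬ (⟨v, hvL⟩ : S) = wu := hwune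
      simp [hu', hv']

lemma walk_cases {V : Type*} {G : SimpleGraph V} {u v : V} (p : G.Walk u v)
    (hu : u ≠ v) (hadj : ¬ G.Adj u v) (c : Sym2 V → ℕ)
    (hnd : (p.edges.map c).Nodup) (hcol : ∀ e ∈ G.edgeSet, c e < 2) :
    ∃ w, G.Adj u w ∧ G.Adj w v ∧ c s(u,w) ≠ c s(w,v) := by
  cases p with
  | nil => exact absurd rfl hu
  | cons h q =>
    rename_i b
    cases q with
    | nil => exact absurd h hadj
    | cons h' q' =>
      rename_i d
      cases q' with
      | nil =>
        refine ⟨b, h, h', ?_⟩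
        simp only [Walk.edges_cons, List.map_cons, List.nodup_cons, List.mem_cons] at hnd
        exact fun hcon => hnd.1 (Or.inl hcon)
      | cons h'' q'' =>
        exfalso
        have e1 : c s(u, b) < 2 := hcol _ (G.mem_edgeSet.2 h)
        have e2 : c s(b, d) < 2 := hcol _ (G.mem_edgeSet.2 h')
        have e3 : c _ < 2 := hcol _ (G.mem_edgeSet.2 h'')
        rename_i z
        simp only [Walk.edges_cons, List.map_cons, List.nodup_cons, List.mem_cons] at hnd
        have h12 : c s(u, b) ≠ c s(b, d) := fun hc => hnd.1 (Or.inl hc)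
        have h13 : c s(u, b) ≠ c s(d, z) := fun hc => hnd.1 (Or.inr (Or.inl hc))
        have h23 : c s(b, d) ≠ c s(d, z) := fun hc => hnd.2.1 (Or.inl hc)
        omega

lemma lower_ge2 {k : ℕ} (n : Fin k → ℕ) (L : Fin k) (h2 : 2 ≤ n L)
    (c : Sym2 (Vt n) → ℕ)
    (hcol : ∀ e ∈ (completeMultipartiteGraph (fun i => Fin (n i))).edgeSet, c e < 1)
    (hrb : RainbowConnected (completeMultipartiteGraph (fun i => Fin (n i))) c) : False := by
  set G := completeMultipartiteGraph (fun i => Fin (n i)) with hG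
  have huv : (⟨L, ⟨0, by omega⟩⟩ : Vt n) ≠ ⟨L, ⟨1, by omega⟩⟩ := by
    intro hcon
    have := sigma_mk_injective hcon
    simp [Fin.ext_iff] at this
  obtain ⟨p, hp, hnd⟩ := hrb ⟨L, ⟨0, by omega⟩⟩ ⟨L, ⟨1, by omega⟩⟩
  obtain ⟨w, h1, h2', hne⟩ := walk_cases p huv (by simp [hG]) c hnd
    (fun e he => lt_of_lt_of_le (hcol e he) (by omega))
  apply hne
  have a1 := hcol _ (G.mem_edgeSet.2 h1)
  have a2 := hcol _ (G.mem_edgeSet.2 h2')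
  omega

lemma lower_ge3 {k : ℕ} (n : Fin k → ℕ) (L : Fin k)
    (hgt : 2 ^ Fintype.card {x : Vt n // x.1 ≠ L} < n L)
    (c : Sym2 (Vt n) → ℕ)
    (hcol : ∀ e ∈ (completeMultipartiteGraph (fun i => Fin (n i))).edgeSet, c e < 2)
    (hrb : RainbowConnected (completeMultipartiteGraph (fun i => Fin (n i))) c) : False := by
  classical
  set G := completeMultipartiteGraph (fun i => Fin (n i)) with hG
  set S := {x : Vt n // x.1 ≠ L} with hS
  set T := {x : Vt n // x.1 = L} with hT
  set φ : T → S → Bool := fun j w => decide (c s(j.1, w.1) = 0) with hφ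
  have hcard : Fintype.card (S → Bool) < Fintype.card T := by
    rw [cardT, Fintype.card_fun, Fintype.card_bool]
    exact hgt
  obtain ⟨j, j', hjj, hφeq⟩ := Fintype.exists_ne_map_eq_of_card_lt φ hcard
  have huv : j.1 ≠ j'.1 := fun hcon => hjj (Subtype.ext hcon)
  obtain ⟨p, hp, hnd⟩ := hrb j.1 j'.1
  have hnadj : ¬ G.Adj j.1 j'.1 := by simp [hG, j.2, j'.2]
  obtain ⟨w, h1, h2', hne⟩ := walk_cases p huv hnadj c hnd hcol
  have hwL : w.1 ≠ L := by
    have : j.1.1 ≠ w.1 := by simpa [hG] using h1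
    rw [j.2] at this
    exact Ne.symm this
  have key := congrFun hφeq ⟨w, hwL⟩
  simp only [hφ, decide_eq_decide] at key
  have e1 : c s(j.1, w) < 2 := hcol _ (G.mem_edgeSet.2 h1)
  have e2 : c s(w, j'.1) < 2 := hcol _ (G.mem_edgeSet.2 h2')
  rw [show s(j'.1, w) = s(w, j'.1) from Sym2.eq_swap] at key
  apply hne
  omega

/-- complete k-partite graph, k ≥ 3, s ≤ t implies rc = min(⌈t^{1/s}⌉, 3). -/
theorem rc_completeMultipartiteGraph_of_le (k : ℕ) (hk : 3 ≤ k) (n : Fin k → ℕ)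
    (hpos : ∀ i, 1 ≤ n i) (hmono : Monotone n)
    (hst : ∑ i ∈ Finset.univ.erase (⟨k - 1, by omega⟩ : Fin k), n i ≤ n ⟨k - 1, by omega⟩) :
    rc (completeMultipartiteGraph (fun i => Fin (n i))) =
      min (ceilRoot (∑ i ∈ Finset.univ.erase (⟨k - 1, by omega⟩ : Fin k), n i)
            (n ⟨k - 1, by omega⟩)) 3 := by
  set L : Fin k := ⟨k - 1, by omega⟩ with hL
  set s : ℕ := ∑ i ∈ Finset.univ.erase L, n i with hs
  set t : ℕ := n L with ht
  have hcardS : Fintype.card {x : Vt n // x.1 ≠ L} = s := cardS n L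
  -- basic inequalities
  have hs2 : 2 ≤ s := by
    have h1 : (Finset.univ.erase L).card = k - 1 := by
      rw [Finset.card_erase_of_mem (Finset.mem_univ L), Finset.card_univ, Fintype.card_fin]
    have h2 : ∑ _i ∈ Finset.univ.erase L, 1 ≤ s := Finset.sum_le_sum (fun i _ => hpos i)
    rw [Finset.sum_const, smul_eq_mul, mul_one, h1] at h2
    omega
  have ht2 : 2 ≤ t := le_trans hs2 hst
  -- distinguished indices
  have i0L : (⟨0, by omega⟩ : Fin k) ≠ L := by simp [hL, Fin.ext_iff]; omega
  have i1L : (⟨1, by omega⟩ : Fin k) ≠ L := by simp [hL, Fin.ext_iff]; omega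
  have i01 : (⟨0, by omega⟩ : Fin k) ≠ (⟨1, by omega⟩ : Fin k) := by simp [Fin.ext_iff]
  rw [rc]
  rcases le_or_gt t (2 ^ s) with hcase | hcase
  · -- rc = 2 = min (ceilRoot s t) 3
    obtain ⟨c2, hc2col, hc2rb⟩ := upper2 n L (hcardS ▸ hst) (hcardS ▸ hcase)
    have h2mem : 2 ∈ {m | ∃ c : Sym2 (Vt n) → ℕ,
        (∀ e ∈ (completeMultipartiteGraph (fun i => Fin (n i))).edgeSet, c e < m) ∧
        RainbowConnected (completeMultipartiteGraph (fun i => Fin (n i))) c} := ⟨c2, hc2col, hc2rb⟩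
    have hinf_mem := Nat.sInf_mem (Set.nonempty_of_mem h2mem)
    have hge : 2 ≤ sInf {m | ∃ c : Sym2 (Vt n) → ℕ,
        (∀ e ∈ (completeMultipartiteGraph (fun i => Fin (n i))).edgeSet, c e < m) ∧
        RainbowConnected (completeMultipartiteGraph (fun i => Fin (n i))) c} := by
      by_contra hcon
      push_neg at hcon
      obtain ⟨c, hcol, hrb⟩ := hinf_mem
      exact lower_ge2 n L ht2 c
        (fun e he => lt_of_lt_of_le (hcol e he) (Nat.lt_succ_iff.mp hcon)) hrb
    have hrc : sInf {m | ∃ c : Sym2 (Vt n) → ℕ,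
        (∀ e ∈ (completeMultipartiteGraph (fun i => Fin (n i))).edgeSet, c e < m) ∧
        RainbowConnected (completeMultipartiteGraph (fun i => Fin (n i))) c} = 2 :=
      le_antisymm (Nat.sInf_le h2mem) hge
    have hcr : ceilRoot s t = 2 := by
      rw [ceilRoot]
      have h2R : 2 ∈ {m : ℕ | t ≤ m ^ s} := hcase
      have hRmem := Nat.sInf_mem (Set.nonempty_of_mem h2R)
      have : 2 ≤ sInf {m : ℕ | t ≤ m ^ s} := by
        by_contra hcon
        push_neg at hcon
        have hle : sInf {m : ℕ | t ≤ m ^ s} ^ s ≤ 1 ^ s :=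
          Nat.pow_le_pow_left (Nat.lt_succ_iff.mp hcon) s
        rw [one_pow] at hle
        have hRval : t ≤ sInf {m : ℕ | t ≤ m ^ s} ^ s := hRmem
        exact absurd (le_trans hRval hle) (not_le.mpr (lt_of_lt_of_le one_lt_two ht2))
      exact le_antisymm (Nat.sInf_le h2R) this
    rw [hrc, hcr]
    norm_num
  · -- rc = 3 = min (ceilRoot s t) 3
    obtain ⟨c3, hc3col, hc3rb⟩ := upper3 n hpos L ⟨0, by omega⟩ ⟨1, by omega⟩ i01 i0L i1L
    have h3mem : 3 ∈ {m | ∃ c : Sym2 (Vt n) → ℕ,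
        (∀ e ∈ (completeMultipartiteGraph (fun i => Fin (n i))).edgeSet, c e < m) ∧
        RainbowConnected (completeMultipartiteGraph (fun i => Fin (n i))) c} := ⟨c3, hc3col, hc3rb⟩
    have hinf_mem := Nat.sInf_mem (Set.nonempty_of_mem h3mem)
    have hge : 3 ≤ sInf {m | ∃ c : Sym2 (Vt n) → ℕ,
        (∀ e ∈ (completeMultipartiteGraph (fun i => Fin (n i))).edgeSet, c e < m) ∧
        RainbowConnected (completeMultipartiteGraph (fun i => Fin (n i))) c} := by
      by_contra hcon
      push_neg at hcon
      obtain ⟨c, hcol, hrb⟩ := hinf_mem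
      exact lower_ge3 n L (hcardS ▸ hcase) c
        (fun e he => lt_of_lt_of_le (hcol e he) (Nat.lt_succ_iff.mp hcon)) hrb
    have hrc : sInf {m | ∃ c : Sym2 (Vt n) → ℕ,
        (∀ e ∈ (completeMultipartiteGraph (fun i => Fin (n i))).edgeSet, c e < m) ∧
        RainbowConnected (completeMultipartiteGraph (fun i => Fin (n i))) c} = 3 :=
      le_antisymm (Nat.sInf_le h3mem) hge
    have hcr : 3 ≤ ceilRoot s t := by
      rw [ceilRoot]
      have htR : t ∈ {m : ℕ | t ≤ m ^ s} := Nat.le_self_pow (Nat.one_le_iff_ne_zero.mp (le_trans one_le_two hs2)) t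
      have hRmem := Nat.sInf_mem (Set.nonempty_of_mem htR)
      by_contra hcon
      push_neg at hcon
      have hle : sInf {m : ℕ | t ≤ m ^ s} ^ s ≤ 2 ^ s :=
        Nat.pow_le_pow_left (Nat.lt_succ_iff.mp hcon) s
      have hRval : t ≤ sInf {m : ℕ | t ≤ m ^ s} ^ s := hRmem
      exact absurd (le_trans hRval hle) (not_le.mpr hcase)
    rw [hrc]
    exact (min_eq_right hcr).symm
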